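/- Let G be a group, (X,d_X) a metric space, Ψ a strong homotopy action of G on X, S ⊆ G a finite symmetric subset containing e, k ∈ ℕ and Λ > 0. Define D : (G × X) × (G × X) → [0,∞] by D(z,z') := the infimum over all finite chains z = z_0, z_1, …, z_m = z' in G × X of ∑_{i<m} c(z_i, z_{i+1}), where c((g,x),(g',x')) is the minimum of Λ·d_X(x,x') (allowed when g = g') and 1 (allowed when (g',x') ∈ S¹_{Ψ,S,k}(g,x)), and equals ∞ when neither is allowed. Then: (a) D is a quasi-metric, i.e. D(z,z) = 0, D(z,z') > 0 for z ≠ z', D(z,z') = D(z',z), and D(z,z'') ≤ D(z,z') + D(z',z''); (b) D((g,x),(g,y)) ≤ Λ·d_X(x,y) for all g, x, y, and D((g,x),(h,y)) ≤ 1 whenever (h,y) ∈ S¹_{Ψ,S,k}(g,x); (c) every function d' : (G × X) × (G × X) → [0,∞] that is symmetric, vanishes on the diagonal, satisfies the triangle inequality and satisfies the two bounds in (b) satisfies d' ≤ D pointwise. In other words, D is the largest quasi-metric on G × X satisfying the two bounds. -/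

import Mathlib

open unitInterval ENNReal

/-- A strong homotopy action of a group `G` on a topological space `X`.
The argument `(g_j, t_j, g_{j-1}, …, g_1, t_1, g_0, x)` is encoded as the list
`[(g_j,t_j),…,(g_1,t_1)]`, the final group element `g_0` and the point `x`.
Continuity (with `G` discrete) is encoded summand-wise: for every length `n` and
every fixed tuple of group elements, the map is jointly continuous in the
parameters `t_i ∈ [0,1]` and in `x`. -/
structure StrongHomotopyAction (G X : Type*) [Group G] [TopologicalSpace X] where
  toFun : List (G × unitInterval) → G → X → X
  continuous' : ∀ (n : ℕ) (gs : Fin n → G) (g₀ : G),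
    Continuous fun p : (Fin n → unitInterval) × X =>
      toFun (List.ofFn fun i => (gs i, p.1 i)) g₀ p.2
  act_zero : ∀ (L₁ L₂ : List (G × unitInterval)) (g g₀ : G) (x : X),
    toFun (L₁ ++ (g, (0 : unitInterval)) :: L₂) g₀ x = toFun L₁ g (toFun L₂ g₀ x)
  act_one_mid : ∀ (L₁ L₂ : List (G × unitInterval)) (g g' : G) (t : unitInterval)
      (g₀ : G) (x : X),
    toFun (L₁ ++ (g, (1 : unitInterval)) :: (g', t) :: L₂) g₀ x
      = toFun (L₁ ++ (g * g', t) :: L₂) g₀ x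
  act_one_last : ∀ (L : List (G × unitInterval)) (g g₀ : G) (x : X),
    toFun (L ++ [(g, (1 : unitInterval))]) g₀ x = toFun L (g * g₀) x
  id_head : ∀ (t : unitInterval) (L : List (G × unitInterval)) (g₀ : G) (x : X),
    toFun (((1 : G), t) :: L) g₀ x = toFun L g₀ x
  id_mid : ∀ (L₁ L₂ : List (G × unitInterval)) (g : G) (t t' : unitInterval)
      (g₀ : G) (x : X),
    toFun (L₁ ++ (g, t) :: ((1 : G), t') :: L₂) g₀ x = toFun (L₁ ++ (g, t * t') :: L₂) g₀ x
  id_last : ∀ (L : List (G × unitInterval)) (g : G) (t : unitInterval) (x : X),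
    toFun (L ++ [(g, t)]) (1 : G) x = toFun L g x
  id_base : ∀ x : X, toFun [] (1 : G) x = x

variable {G X : Type*} [Group G] [MetricSpace X]

/-- `F_g(Ψ,S,k)`: the set of maps `x ↦ Ψ(g_k, t_k, …, g_0, x)` with `g_i ∈ S`,
`t_i ∈ [0,1]` and `g_k ⋯ g_0 = g`. -/
def FMaps (Ψ : StrongHomotopyAction G X) (S : Set G) (k : ℕ) (g : G) : Set (X → X) :=
  { f | ∃ (L : List (G × unitInterval)) (g₀ : G), L.length = k ∧
      (∀ q ∈ L, q.1 ∈ S) ∧ g₀ ∈ S ∧ (L.map Prod.fst).prod * g₀ = g ∧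
      f = fun x => Ψ.toFun L g₀ x }

/-- `S¹_{Ψ,S,k}(g,x)`. -/
def sOne (Ψ : StrongHomotopyAction G X) (S : Set G) (k : ℕ) (z : G × X) : Set (G × X) :=
  { w | ∃ a ∈ S, ∃ b ∈ S, ∃ f ∈ FMaps Ψ S k a, ∃ f' ∈ FMaps Ψ S k b,
      f z.2 = f' w.2 ∧ w.1 = z.1 * a⁻¹ * b }

/-- `Sⁿ_{Ψ,S,k}(g,x)`, defined inductively; `sIter Ψ S k 1 = sOne Ψ S k`. -/
def sIter (Ψ : StrongHomotopyAction G X) (S : Set G) (k : ℕ) : ℕ → G × X → Set (G × X)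
  | 0 => fun z => {z}
  | n + 1 => fun z => ⋃ w ∈ sIter Ψ S k n z, sOne Ψ S k w

open Classical in
/-- The cost of a single step in a chain: the minimum of `Λ·d_X(x,x')`
(allowed when the group components agree) and `1` (allowed when the target lies in
`S¹_{Ψ,S,k}` of the source); `∞` if neither is allowed. -/
noncomputable def qcost (Ψ : StrongHomotopyAction G X) (S : Set G) (k : ℕ) (Λ : ℝ)
    (z w : G × X) : ℝ≥0∞ :=
  min (if z.1 = w.1 then ENNReal.ofReal (Λ * dist z.2 w.2) else ⊤)
      (if w ∈ sOne Ψ S k z then 1 else ⊤)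

/-- The quasi-metric `d_{Ψ,S,k,Λ}` on `G × X`: the infimum over all finite chains
of the sum of the step costs. -/
noncomputable def qdist (Ψ : StrongHomotopyAction G X) (S : Set G) (k : ℕ) (Λ : ℝ)
    (z w : G × X) : ℝ≥0∞ :=
  ⨅ (m : ℕ) (c : Fin (m + 1) → G × X) (_ : c 0 = z) (_ : c (Fin.last m) = w),
    ∑ i : Fin m, qcost Ψ S k Λ (c i.castSucc) (c i.succ)

section Aux

variable (Ψ : StrongHomotopyAction G X) (S : Set G) (k : ℕ) (Λ : ℝ)

lemma sOne_symm_mem {z w : G × X} (h : w ∈ sOne Ψ S k z) : z ∈ sOne Ψ S k w := by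
  obtain ⟨a, ha, b, hb, f, hf, f', hf', heq, hg⟩ := h
  exact ⟨b, hb, a, ha, f', hf', f, hf, heq.symm, by rw [hg]; group⟩

lemma qcost_symm (z w : G × X) : qcost Ψ S k Λ z w = qcost Ψ S k Λ w z := by
  unfold qcost
  by_cases h : z.1 = w.1
  · by_cases h2 : w ∈ sOne Ψ S k z
    · rw [if_pos h, if_pos h.symm, if_pos h2, if_pos (sOne_symm_mem Ψ S k h2), dist_comm]
    · have h2' : z ∉ sOne Ψ S k w := fun hh => h2 (sOne_symm_mem Ψ S k hh)
      rw [if_pos h, if_pos h.symm, if_neg h2, if_neg h2', dist_comm]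
  · have h' : ¬ w.1 = z.1 := fun hh => h hh.symm
    by_cases h2 : w ∈ sOne Ψ S k z
    · rw [if_neg h, if_neg h', if_pos h2, if_pos (sOne_symm_mem Ψ S k h2)]
    · have h2' : z ∉ sOne Ψ S k w := fun hh => h2 (sOne_symm_mem Ψ S k hh)
      rw [if_neg h, if_neg h', if_neg h2, if_neg h2']

/-- Conversion between ℕ-indexed and `Fin`-indexed chain sums. -/
lemma natChain_sum (m : ℕ) (c : Fin (m + 1) → G × X) :
    ∑ i ∈ Finset.range m,
      qcost Ψ S k Λ (c ⟨min i m, Nat.lt_succ_of_le (min_le_right _ _)⟩)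
        (c ⟨min (i + 1) m, Nat.lt_succ_of_le (min_le_right _ _)⟩)
      = ∑ i : Fin m, qcost Ψ S k Λ (c i.castSucc) (c i.succ) := by
  rw [← Fin.sum_univ_eq_sum_range]
  refine Finset.sum_congr rfl fun i _ => ?_
  have hi' : (i : ℕ) < m := i.isLt
  exact congrArg₂ (qcost Ψ S k Λ)
    (congrArg c (Fin.ext (by simp only [Fin.coe_castSucc]; omega)))
    (congrArg c (Fin.ext (by simp only [Fin.val_succ]; omega)))

/-- Any ℕ-indexed chain bounds `qdist` from above. -/
lemma qdist_le_chain (m : ℕ) (c : ℕ → G × X) :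
    qdist Ψ S k Λ (c 0) (c m) ≤ ∑ i ∈ Finset.range m, qcost Ψ S k Λ (c i) (c (i + 1)) := by
  unfold qdist
  refine iInf_le_of_le m ?_
  refine iInf_le_of_le (fun i : Fin (m + 1) => c i) ?_
  refine iInf_le_of_le (by simp) ?_
  refine iInf_le_of_le (by simp) ?_
  exact le_of_eq (Fin.sum_univ_eq_sum_range (fun j => qcost Ψ S k Λ (c j) (c (j + 1))) m)

/-- Chain version of the triangle inequality for an arbitrary cost function. -/
lemma chain_triangle (f : G × X → G × X → ℝ≥0∞) (hrefl : ∀ z, f z z = 0)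
    (htri : ∀ z w v, f z v ≤ f z w + f w v) :
    ∀ (m : ℕ) (c : ℕ → G × X),
      f (c 0) (c m) ≤ ∑ i ∈ Finset.range m, f (c i) (c (i + 1)) := by
  intro m
  induction m with
  | zero => intro c; simp [hrefl]
  | succ n ih =>
      intro c
      calc f (c 0) (c (n + 1)) ≤ f (c 0) (c n) + f (c n) (c (n + 1)) := htri _ _ _
        _ ≤ (∑ i ∈ Finset.range n, f (c i) (c (i + 1))) + f (c n) (c (n + 1)) := by
            gcongr; exact ih c
        _ = ∑ i ∈ Finset.range (n + 1), f (c i) (c (i + 1)) :=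
            (Finset.sum_range_succ _ n).symm

/-- Any symmetric, reflexive, triangle-inequality cost function dominated by `qcost`
is dominated by `qdist`. -/
lemma le_qdist_of_le_qcost (f : G × X → G × X → ℝ≥0∞) (hrefl : ∀ z, f z z = 0)
    (htri : ∀ z w v, f z v ≤ f z w + f w v)
    (hle : ∀ z w, f z w ≤ qcost Ψ S k Λ z w) (z w : G × X) :
    f z w ≤ qdist Ψ S k Λ z w := by
  unfold qdist
  refine le_iInf fun m => le_iInf fun c => le_iInf fun h0 => le_iInf fun hl => ?_
  subst h0; subst hl
  set cc : ℕ → G × X := fun n => c ⟨min n m, Nat.lt_succ_of_le (min_le_right _ _)⟩ with hcc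
  have hc0 : cc 0 = c 0 := by
    simp only [hcc]; exact congrArg c (Fin.ext (by simp))
  have hcm : cc m = c (Fin.last m) := by
    simp only [hcc]; exact congrArg c (Fin.ext (by simp))
  calc f (c 0) (c (Fin.last m)) = f (cc 0) (cc m) := by rw [hc0, hcm]
    _ ≤ ∑ i ∈ Finset.range m, f (cc i) (cc (i + 1)) := chain_triangle f hrefl htri m cc
    _ ≤ ∑ i ∈ Finset.range m, qcost Ψ S k Λ (cc i) (cc (i + 1)) :=
        Finset.sum_le_sum fun i _ => hle _ _
    _ = ∑ i : Fin m, qcost Ψ S k Λ (c i.castSucc) (c i.succ) := by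
        simp only [hcc]
        exact natChain_sum Ψ S k Λ m c

lemma qdist_self (z : G × X) : qdist Ψ S k Λ z z = 0 :=
  le_antisymm (by simpa using qdist_le_chain Ψ S k Λ 0 (fun _ => z)) zero_le

lemma qdist_symm (z w : G × X) : qdist Ψ S k Λ z w = qdist Ψ S k Λ w z := by
  have key : ∀ z w : G × X, qdist Ψ S k Λ w z ≤ qdist Ψ S k Λ z w := by
    intro z w
    conv_rhs => rw [qdist]
    refine le_iInf fun m => le_iInf fun c => le_iInf fun h0 => le_iInf fun hl => ?_
    subst h0; subst hl
    set cc : ℕ → G × X :=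
      fun n => c ⟨m - min n m, Nat.lt_succ_of_le (Nat.sub_le _ _)⟩ with hcc
    have hc0 : cc 0 = c (Fin.last m) := by
      simp only [hcc]; exact congrArg c (Fin.ext (by simp))
    have hcm : cc m = c 0 := by
      simp only [hcc]; exact congrArg c (Fin.ext (by simp))
    have h := qdist_le_chain Ψ S k Λ m cc
    rw [hc0, hcm] at h
    refine h.trans (le_of_eq ?_)
    have step : ∀ i ∈ Finset.range m,
        qcost Ψ S k Λ (cc i) (cc (i + 1))
          = qcost Ψ S k Λ
              (c ⟨min (m - 1 - i) m, Nat.lt_succ_of_le (min_le_right _ _)⟩)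
              (c ⟨min ((m - 1 - i) + 1) m, Nat.lt_succ_of_le (min_le_right _ _)⟩) := by
      intro i hi
      have hi' : i < m := Finset.mem_range.mp hi
      rw [qcost_symm]
      simp only [hcc]
      exact congrArg₂ (qcost Ψ S k Λ)
        (congrArg c (Fin.ext (by simp only []; omega)))
        (congrArg c (Fin.ext (by simp only []; omega)))
    calc ∑ i ∈ Finset.range m, qcost Ψ S k Λ (cc i) (cc (i + 1))
        = ∑ i ∈ Finset.range m,
            qcost Ψ S k Λ
              (c ⟨min (m - 1 - i) m, Nat.lt_succ_of_le (min_le_right _ _)⟩)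
              (c ⟨min ((m - 1 - i) + 1) m, Nat.lt_succ_of_le (min_le_right _ _)⟩) :=
          Finset.sum_congr rfl step
      _ = ∑ i ∈ Finset.range m,
            qcost Ψ S k Λ
              (c ⟨min i m, Nat.lt_succ_of_le (min_le_right _ _)⟩)
              (c ⟨min (i + 1) m, Nat.lt_succ_of_le (min_le_right _ _)⟩) :=
          Finset.sum_range_reflect (fun j => qcost Ψ S k Λ
            (c ⟨min j m, Nat.lt_succ_of_le (min_le_right _ _)⟩)
            (c ⟨min (j + 1) m, Nat.lt_succ_of_le (min_le_right _ _)⟩)) m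
      _ = ∑ i : Fin m, qcost Ψ S k Λ (c i.castSucc) (c i.succ) :=
          natChain_sum Ψ S k Λ m c
  exact le_antisymm (key w z) (key z w)

lemma qdist_triangle (z w v : G × X) :
    qdist Ψ S k Λ z v ≤ qdist Ψ S k Λ z w + qdist Ψ S k Λ w v := by
  refine ENNReal.le_of_forall_pos_le_add fun ε hε htop => ?_
  have hzw : qdist Ψ S k Λ z w ≠ ⊤ := by
    intro h; rw [h] at htop; simp at htop
  have hwv : qdist Ψ S k Λ w v ≠ ⊤ := by
    intro h; rw [h] at htop; simp [h] at htop
  have hε2 : (0 : ℝ≥0∞) < (ε : ℝ≥0∞) / 2 := by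
    simp [ENNReal.div_pos_iff, hε.ne']
  have h1 : qdist Ψ S k Λ z w < qdist Ψ S k Λ z w + ε / 2 :=
    ENNReal.lt_add_right hzw hε2.ne'
  have h2 : qdist Ψ S k Λ w v < qdist Ψ S k Λ w v + ε / 2 :=
    ENNReal.lt_add_right hwv hε2.ne'
  rw [qdist, iInf_lt_iff] at h1 h2
  obtain ⟨m₁, h1⟩ := h1
  rw [iInf_lt_iff] at h1
  obtain ⟨c₁, h1⟩ := h1
  rw [iInf_lt_iff] at h1
  obtain ⟨hc₁0, h1⟩ := h1
  rw [iInf_lt_iff] at h1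
  obtain ⟨hc₁l, h1⟩ := h1
  obtain ⟨m₂, h2⟩ := h2
  rw [iInf_lt_iff] at h2
  obtain ⟨c₂, h2⟩ := h2
  rw [iInf_lt_iff] at h2
  obtain ⟨hc₂0, h2⟩ := h2
  rw [iInf_lt_iff] at h2
  obtain ⟨hc₂l, h2⟩ := h2
  -- convert to ℕ-chains and concatenate
  set d₁ : ℕ → G × X := fun n => c₁ ⟨min n m₁, Nat.lt_succ_of_le (min_le_right _ _)⟩ with hd₁
  set d₂ : ℕ → G × X := fun n => c₂ ⟨min n m₂, Nat.lt_succ_of_le (min_le_right _ _)⟩ with hd₂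
  have hd₁0 : d₁ 0 = z := by
    rw [← hc₁0]; simp only [hd₁]; exact congrArg c₁ (Fin.ext (by simp))
  have hd₁l : d₁ m₁ = w := by
    rw [← hc₁l]; simp only [hd₁]; exact congrArg c₁ (Fin.ext (by simp))
  have hd₂0 : d₂ 0 = w := by
    rw [← hc₂0]; simp only [hd₂]; exact congrArg c₂ (Fin.ext (by simp))
  have hd₂l : d₂ m₂ = v := by
    rw [← hc₂l]; simp only [hd₂]; exact congrArg c₂ (Fin.ext (by simp))
  set cc : ℕ → G × X := fun n => if n ≤ m₁ then d₁ n else d₂ (n - m₁) with hcc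
  have hcc0 : cc 0 = z := by simp [hcc, hd₁0]
  have hccl : cc (m₁ + m₂) = v := by
    rcases Nat.eq_zero_or_pos m₂ with h | h
    · subst h
      simp only [hcc, Nat.add_zero, le_refl, if_pos, hd₁l]
      rw [← hd₂0, ← hd₂l]
    · have : ¬ m₁ + m₂ ≤ m₁ := by omega
      simp only [hcc, this, if_false, Nat.add_sub_cancel_left, hd₂l]
  have hsum : ∑ i ∈ Finset.range (m₁ + m₂), qcost Ψ S k Λ (cc i) (cc (i + 1))
      = (∑ i ∈ Finset.range m₁, qcost Ψ S k Λ (d₁ i) (d₁ (i + 1)))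
        + ∑ i ∈ Finset.range m₂, qcost Ψ S k Λ (d₂ i) (d₂ (i + 1)) := by
    rw [Finset.sum_range_add]
    congr 1
    · refine Finset.sum_congr rfl fun i hi => ?_
      have hi' : i < m₁ := Finset.mem_range.mp hi
      have h1 : cc i = d₁ i := by simp [hcc, Nat.le_of_lt hi']
      have h2 : cc (i + 1) = d₁ (i + 1) := by
        have hle : i + 1 ≤ m₁ := hi'
        simp [hcc, hle]
      rw [h1, h2]
    · refine Finset.sum_congr rfl fun i hi => ?_
      have hi' : i < m₂ := Finset.mem_range.mp hi
      have h1 : cc (m₁ + i) = d₂ i := by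
        rcases Nat.eq_zero_or_pos i with h | h
        · subst h; simp [hcc, hd₁l, hd₂0]
        · have : ¬ m₁ + i ≤ m₁ := by omega
          simp [hcc, this]
      have h2 : cc (m₁ + i + 1) = d₂ (i + 1) := by
        have : ¬ m₁ + i + 1 ≤ m₁ := by omega
        have harith : m₁ + i + 1 - m₁ = i + 1 := by omega
        simp [hcc, this, harith]
      rw [h1, h2]
  have hbig := qdist_le_chain Ψ S k Λ (m₁ + m₂) cc
  rw [hcc0, hccl, hsum] at hbig
  have e1 : ∑ i ∈ Finset.range m₁, qcost Ψ S k Λ (d₁ i) (d₁ (i + 1))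
      = ∑ i : Fin m₁, qcost Ψ S k Λ (c₁ i.castSucc) (c₁ i.succ) := by
    simp only [hd₁]; exact natChain_sum Ψ S k Λ m₁ c₁
  have e2 : ∑ i ∈ Finset.range m₂, qcost Ψ S k Λ (d₂ i) (d₂ (i + 1))
      = ∑ i : Fin m₂, qcost Ψ S k Λ (c₂ i.castSucc) (c₂ i.succ) := by
    simp only [hd₂]; exact natChain_sum Ψ S k Λ m₂ c₂
  rw [e1, e2] at hbig
  calc qdist Ψ S k Λ z v
      ≤ (∑ i : Fin m₁, qcost Ψ S k Λ (c₁ i.castSucc) (c₁ i.succ))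
        + ∑ i : Fin m₂, qcost Ψ S k Λ (c₂ i.castSucc) (c₂ i.succ) := hbig
    _ ≤ (qdist Ψ S k Λ z w + ε / 2) + (qdist Ψ S k Λ w v + ε / 2) :=
        add_le_add h1.le h2.le
    _ = qdist Ψ S k Λ z w + qdist Ψ S k Λ w v + ε := by
        rw [add_add_add_comm, ENNReal.add_halves]

lemma min_one_subadd {x y z : ℝ≥0∞} (h : x ≤ y + z) :
    min 1 x ≤ min 1 y + min 1 z := by
  rcases le_total 1 y with hy | hy
  · calc min 1 x ≤ 1 := min_le_left _ _
      _ = min 1 y := (min_eq_left hy).symm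
      _ ≤ min 1 y + min 1 z := le_self_add
  rcases le_total 1 z with hz | hz
  · calc min 1 x ≤ 1 := min_le_left _ _
      _ = min 1 z := (min_eq_left hz).symm
      _ ≤ min 1 y + min 1 z := le_add_self
  · rw [min_eq_right hy, min_eq_right hz]
    exact (min_le_right _ _).trans h

end Aux

/-- The chain infimum `D = d_{Ψ,S,k,Λ}` is the largest quasi-metric on `G × X`
satisfying `D((g,x),(g,y)) ≤ Λ·d_X(x,y)` and `D((g,x),(h,y)) ≤ 1` for
`(h,y) ∈ S¹_{Ψ,S,k}(g,x)`. -/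
theorem qdist_is_largest_quasimetric {G X : Type*} [Group G] [MetricSpace X]
    (Ψ : StrongHomotopyAction G X) (S : Set G) (hSfin : S.Finite)
    (hSsymm : ∀ s ∈ S, s⁻¹ ∈ S) (hSone : (1 : G) ∈ S) (k : ℕ) (Λ : ℝ) (hΛ : 0 < Λ) :
    -- (a) `D` is a quasi-metric
    ((∀ z : G × X, qdist Ψ S k Λ z z = 0) ∧
     (∀ z w : G × X, z ≠ w → 0 < qdist Ψ S k Λ z w) ∧
     (∀ z w : G × X, qdist Ψ S k Λ z w = qdist Ψ S k Λ w z) ∧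
     (∀ z w v : G × X, qdist Ψ S k Λ z v ≤ qdist Ψ S k Λ z w + qdist Ψ S k Λ w v)) ∧
    -- (b) the two bounds
    ((∀ (g : G) (x y : X),
        qdist Ψ S k Λ (g, x) (g, y) ≤ ENNReal.ofReal (Λ * dist x y)) ∧
     (∀ z w : G × X, w ∈ sOne Ψ S k z → qdist Ψ S k Λ z w ≤ 1)) ∧
    -- (c) maximality
    (∀ d' : G × X → G × X → ℝ≥0∞,
      (∀ z : G × X, d' z z = 0) →
      (∀ z w : G × X, d' z w = d' w z) →
      (∀ z w v : G × X, d' z v ≤ d' z w + d' w v) →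
      (∀ (g : G) (x y : X), d' (g, x) (g, y) ≤ ENNReal.ofReal (Λ * dist x y)) →
      (∀ z w : G × X, w ∈ sOne Ψ S k z → d' z w ≤ 1) →
      ∀ z w : G × X, d' z w ≤ qdist Ψ S k Λ z w) := by
  classical
  -- (c) maximality, proved first since it is used for positivity
  have hmax : ∀ d' : G × X → G × X → ℝ≥0∞,
      (∀ z : G × X, d' z z = 0) →
      (∀ z w : G × X, d' z w = d' w z) →
      (∀ z w v : G × X, d' z v ≤ d' z w + d' w v) →
      (∀ (g : G) (x y : X), d' (g, x) (g, y) ≤ ENNReal.ofReal (Λ * dist x y)) →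
      (∀ z w : G × X, w ∈ sOne Ψ S k z → d' z w ≤ 1) →
      ∀ z w : G × X, d' z w ≤ qdist Ψ S k Λ z w := by
    intro d' hrefl _hsymm htri hb1 hb2 z w
    refine le_qdist_of_le_qcost Ψ S k Λ d' hrefl htri ?_ z w
    intro z w
    unfold qcost
    refine le_min ?_ ?_
    · by_cases h : z.1 = w.1
      · rw [if_pos h]
        obtain ⟨g, x⟩ := z; obtain ⟨g', y⟩ := w
        have hgg : g = g' := h
        subst hgg
        exact hb1 g x y
      · rw [if_neg h]; exact le_top
    · by_cases h : w ∈ sOne Ψ S k z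
      · rw [if_pos h]; exact hb2 z w h
      · rw [if_neg h]; exact le_top
  -- bound 1
  have hb1 : ∀ (g : G) (x y : X),
      qdist Ψ S k Λ (g, x) (g, y) ≤ ENNReal.ofReal (Λ * dist x y) := by
    intro g x y
    have h := qdist_le_chain Ψ S k Λ 1 (fun n => if n = 0 then (g, x) else (g, y))
    simp only [Finset.sum_range_one] at h
    norm_num at h
    refine h.trans ?_
    unfold qcost
    refine (min_le_left _ _).trans (le_of_eq ?_)
    simp
  -- bound 2
  have hb2 : ∀ z w : G × X, w ∈ sOne Ψ S k z → qdist Ψ S k Λ z w ≤ 1 := by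
    intro z w hzw
    have h := qdist_le_chain Ψ S k Λ 1 (fun n => if n = 0 then z else w)
    simp only [Finset.sum_range_one] at h
    norm_num at h
    refine h.trans ?_
    unfold qcost
    refine (min_le_right _ _).trans (le_of_eq ?_)
    rw [if_pos hzw]
  -- positivity
  have hpos : ∀ z w : G × X, z ≠ w → 0 < qdist Ψ S k Λ z w := by
    intro z w hzw
    set d' : G × X → G × X → ℝ≥0∞ := fun z w =>
      if z.1 = w.1 then min 1 (ENNReal.ofReal (Λ * dist z.2 w.2)) else 1 with hd'
    have hrefl : ∀ z, d' z z = 0 := by intro z; simp [hd']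
    have hsymm : ∀ z w, d' z w = d' w z := by
      intro z w; simp only [hd']
      by_cases h : z.1 = w.1
      · rw [if_pos h, if_pos h.symm, dist_comm]
      · rw [if_neg h, if_neg (fun hh => h hh.symm)]
    have htri : ∀ z w v, d' z v ≤ d' z w + d' w v := by
      intro z w v; simp only [hd']
      by_cases hzv : z.1 = v.1
      · rw [if_pos hzv]
        by_cases hzw' : z.1 = w.1
        · rw [if_pos hzw', if_pos (hzw'.symm.trans hzv)]
          refine min_one_subadd ?_
          have hd : dist z.2 v.2 ≤ dist z.2 w.2 + dist w.2 v.2 := dist_triangle _ _ _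
          calc ENNReal.ofReal (Λ * dist z.2 v.2)
              ≤ ENNReal.ofReal (Λ * (dist z.2 w.2 + dist w.2 v.2)) := by
                apply ENNReal.ofReal_le_ofReal; nlinarith [hΛ.le]
            _ = ENNReal.ofReal (Λ * dist z.2 w.2) + ENNReal.ofReal (Λ * dist w.2 v.2) := by
                rw [mul_add, ENNReal.ofReal_add (by positivity) (by positivity)]
        · rw [if_neg hzw']
          exact le_add_right (min_le_left _ _)
      · rw [if_neg hzv]
        by_cases hzw' : z.1 = w.1
        · have hwv : ¬ w.1 = v.1 := fun h => hzv (hzw'.trans h)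
          rw [if_neg hwv]
          exact le_add_self
        · rw [if_neg hzw']; exact le_self_add
    have hdb1 : ∀ (g : G) (x y : X), d' (g, x) (g, y) ≤ ENNReal.ofReal (Λ * dist x y) := by
      intro g x y
      simp only [hd']
      split_ifs with h
      · exact min_le_right _ _
      · simp at h
    have hdb2 : ∀ z w : G × X, w ∈ sOne Ψ S k z → d' z w ≤ 1 := by
      intro z w _
      simp only [hd']
      split_ifs
      exacts [min_le_left _ _, le_refl _]
    have hle := hmax d' hrefl hsymm htri hdb1 hdb2 z w
    refine lt_of_lt_of_le ?_ hle
    simp only [hd']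
    by_cases h : z.1 = w.1
    · rw [if_pos h]
      have hxy : z.2 ≠ w.2 := fun h2 => hzw (Prod.ext h h2)
      exact lt_min zero_lt_one
        (ENNReal.ofReal_pos.mpr (mul_pos hΛ (dist_pos.mpr hxy)))
    · rw [if_neg h]; exact zero_lt_one
  exact ⟨⟨fun z => qdist_self Ψ S k Λ z, hpos, fun z w => qdist_symm Ψ S k Λ z w,
    fun z w v => qdist_triangle Ψ S k Λ z w v⟩, ⟨hb1, hb2⟩, hmax⟩
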